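/- Let n ≥ 1, m ∈ ℤ, and let λ ∈ ℝ^n have pairwise distinct nonzero entries. Let J(λ) be the n×n Jacobian matrix J_{ij} = ∂q_i/∂λ_j of the Viète map, and let G^{(m)}(λ) = diag(λ_1^m/Δ_1(λ), …, λ_n^m/Δ_n(λ)). Then the n×n matrix J(λ) G^{(m)}(λ) J(λ)^T is invertible and its inverse is the matrix whose (i,j) entry is V_1^{(2n−m−i−j)}(q(λ)); i.e., the covariant metric g^{(m)} in Viète coordinates has entries g^{(m)}_{ij} = V_1^{(2n−m−i−j)}. -/

import Mathlib

noncomputable section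

/-- Viète polynomial `q_i(λ) = (-1)^i e_i(λ)`; by convention `q_0 = 1` and `q_i = 0` for `i > n`. -/
def viete {n : ℕ} (i : ℕ) (lam : Fin n → ℝ) : ℝ :=
  (-1 : ℝ) ^ i * ∑ s ∈ Finset.powersetCard i (Finset.univ : Finset (Fin n)), ∏ j ∈ s, lam j

/-- The partial derivative `∂q_i/∂λ_j` of the `i`-th Viète polynomial. -/
def vieteD {n : ℕ} (i : ℕ) (lam : Fin n → ℝ) (j : Fin n) : ℝ :=
  fderiv ℝ (viete i) lam (Pi.single j 1)

/-- `Δ_j(λ) = ∏_{s ≠ j} (λ_j - λ_s)`. -/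
def Delta {n : ℕ} (lam : Fin n → ℝ) (j : Fin n) : ℝ :=
  ∏ s ∈ Finset.univ.erase j, (lam j - lam s)

/-- Benenti potentials `V_i^{(k)}` for `k ≥ 0`: `Vpos n q k i = V_i^{(k)}(q)` (`i` 1-based),
with `V_i^{(0)} = δ_{i n}` and `V_i^{(k+1)} = V_{i+1}^{(k)} - q_i V_1^{(k)}`, `V_{n+1}^{(k)} := 0`. -/
def Vpos (n : ℕ) (q : ℕ → ℝ) : ℕ → ℕ → ℝ
  | 0, i => if i = n then 1 else 0
  | k + 1, i => (if i = n then 0 else Vpos n q k (i + 1)) - q i * Vpos n q k 1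

/-- Benenti potentials for negative superscripts: `Vneg n q j r = V_r^{(-j)}(q)`, via the
backward recursion `V_r^{(k)} = V_{r-1}^{(k+1)} - (q_{r-1}/q_n) V_n^{(k+1)}`, with
`V_0 := 0` and `q_0 := 1`. -/
def Vneg (n : ℕ) (q : ℕ → ℝ) : ℕ → ℕ → ℝ
  | 0, r => if r = n then 1 else 0
  | j + 1, r =>
      (if r = 1 then 0 else Vneg n q j (r - 1)) -
        (if r = 1 then 1 else q (r - 1)) / q n * Vneg n q j n

/-- Benenti potential `V_i^{(k)}(q)` for `k : ℤ`, `i` 1-based. -/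
def benenti (n : ℕ) (q : ℕ → ℝ) (k : ℤ) (i : ℕ) : ℝ :=
  if 0 ≤ k then Vpos n q k.toNat i else Vneg n q (-k).toNat i

/-- The Jacobian matrix `J_{ij} = ∂q_i/∂λ_j` of the Viète map (`i` 1-based). -/
def Jmat (n : ℕ) (lam : Fin n → ℝ) : Matrix (Fin n) (Fin n) ℝ :=
  Matrix.of fun i j => vieteD ((i : ℕ) + 1) lam j

/-- The contravariant metric `G^{(m)} = diag(λ_j^m / Δ_j(λ))`. -/
def Gmat (n : ℕ) (m : ℤ) (lam : Fin n → ℝ) : Matrix (Fin n) (Fin n) ℝ :=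
  Matrix.diagonal fun j => lam j ^ m / Delta lam j

/-- The candidate covariant metric in Viète coordinates: `g_{ij} = V_1^{(2n-m-i-j)}(q(λ))`
(`i`, `j` 1-based). -/
def gmat (n : ℕ) (m : ℤ) (lam : Fin n → ℝ) : Matrix (Fin n) (Fin n) ℝ :=
  Matrix.of fun i j =>
    benenti n (fun a => viete a lam)
      (2 * (n : ℤ) - m - (((i : ℕ) : ℤ) + 1) - (((j : ℕ) : ℤ) + 1)) 1

namespace CovProof

open Finset Matrix

variable {n : ℕ}

/-- `e_i` of the variables `λ` with `λ_j` removed. -/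
def Es (lam : Fin n → ℝ) (i : ℕ) (j : Fin n) : ℝ :=
  ∑ s ∈ Finset.powersetCard i (Finset.univ.erase j), ∏ a ∈ s, lam a

/-- `q_i(λ̂_j) = (-1)^i e_i(λ̂_j)`. -/
def Qh (lam : Fin n → ℝ) (i : ℕ) (j : Fin n) : ℝ := (-1)^i * Es lam i j

lemma Es_zero (lam : Fin n → ℝ) (j : Fin n) : Es lam 0 j = 1 := by simp [Es]

lemma Qh_zero (lam : Fin n → ℝ) (j : Fin n) : Qh lam 0 j = 1 := by simp [Qh, Es_zero]

lemma Es_n (lam : Fin n → ℝ) (j : Fin n) : Es lam n j = 0 := by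
  have h : (Finset.univ.erase j).card < n := by
    have h2 := Finset.card_erase_of_mem (Finset.mem_univ j)
    have h3 : 0 < n := j.pos
    simp only [Finset.card_univ, Fintype.card_fin] at h2
    omega
  rw [Es, Finset.powersetCard_eq_empty.mpr h]
  simp

lemma Qh_n (lam : Fin n → ℝ) (j : Fin n) : Qh lam n j = 0 := by simp [Qh, Es_n]

lemma viete_split (lam : Fin n → ℝ) (i : ℕ) (j : Fin n) :
    ∑ s ∈ Finset.powersetCard (i+1) (Finset.univ : Finset (Fin n)), ∏ a ∈ s, lam a
      = Es lam (i+1) j + lam j * Es lam i j := by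
  have hj : j ∉ Finset.univ.erase j := Finset.notMem_erase _ _
  have h1 : (Finset.univ : Finset (Fin n)) = insert j (Finset.univ.erase j) :=
    (Finset.insert_erase (Finset.mem_univ j)).symm
  rw [h1, Finset.powersetCard_succ_insert hj, Finset.sum_union, Finset.sum_image]
  · rw [Es, Es, Finset.mul_sum]
    congr 1
    refine Finset.sum_congr rfl fun t ht => ?_
    have hjt : j ∉ t := fun hh => hj ((Finset.mem_powersetCard.mp ht).1 hh)
    rw [Finset.prod_insert hjt]
  · intro x hx y hy hxy
    have hjx : j ∉ x := fun hh => hj ((Finset.mem_powersetCard.mp hx).1 hh)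
    have hjy : j ∉ y := fun hh => hj ((Finset.mem_powersetCard.mp hy).1 hh)
    have := congrArg (Finset.erase · j) hxy
    simpa [Finset.erase_insert hjx, Finset.erase_insert hjy] using this
  · rw [Finset.disjoint_left]
    intro t ht ht'
    have hjt : j ∉ t := fun hh => hj ((Finset.mem_powersetCard.mp ht).1 hh)
    obtain ⟨u, hu, rfl⟩ := Finset.mem_image.mp ht'
    exact hjt (Finset.mem_insert_self _ _)

lemma key (lam : Fin n → ℝ) (i : ℕ) (j : Fin n) :
    lam j * Qh lam i j = Qh lam (i+1) j - viete (i+1) lam := by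
  rw [viete, viete_split lam i j, Qh, Qh]
  ring

lemma vieteD_eq (lam : Fin n → ℝ) (i : ℕ) (j : Fin n) :
    vieteD i lam j = (-1:ℝ)^i * ∑ s ∈ Finset.powersetCard i (Finset.univ : Finset (Fin n)),
      (if j ∈ s then ∏ b ∈ s.erase j, lam b else 0) := by
  have hsum : HasFDerivAt
      (fun l : Fin n → ℝ =>
        ∑ s ∈ Finset.powersetCard i (Finset.univ : Finset (Fin n)), ∏ a ∈ s, l a)
      (∑ s ∈ Finset.powersetCard i (Finset.univ : Finset (Fin n)),
        ∑ a ∈ s, (∏ b ∈ s.erase a, lam b) • (ContinuousLinearMap.proj a : ((Fin n) → ℝ) →L[ℝ] ℝ))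
      lam :=
    HasFDerivAt.fun_sum fun s _ =>
      HasFDerivAt.finset_prod fun a _ => hasFDerivAt_apply a lam
  have h : HasFDerivAt (viete i)
      ((-1:ℝ)^i • ∑ s ∈ Finset.powersetCard i (Finset.univ : Finset (Fin n)),
        ∑ a ∈ s, (∏ b ∈ s.erase a, lam b) • (ContinuousLinearMap.proj a : ((Fin n) → ℝ) →L[ℝ] ℝ))
      lam := hsum.const_mul _
  rw [vieteD, h.fderiv]
  simp only [ContinuousLinearMap.smul_apply, ContinuousLinearMap.coe_sum', Finset.sum_apply,
    ContinuousLinearMap.coe_smul', Pi.smul_apply, ContinuousLinearMap.proj_apply,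
    smul_eq_mul]
  congr 1
  refine Finset.sum_congr rfl fun s _ => ?_
  rw [Finset.sum_congr rfl (fun a _ => ?_),
    Finset.sum_ite_eq' s j (fun a => ∏ b ∈ s.erase a, lam b)]
  rw [Pi.single_apply]
  split <;> simp_all

lemma vieteD_succ (lam : Fin n → ℝ) (i : ℕ) (j : Fin n) :
    vieteD (i+1) lam j = -Qh lam i j := by
  rw [vieteD_eq]
  have hj : j ∉ Finset.univ.erase j := Finset.notMem_erase _ _
  have h1 : (Finset.univ : Finset (Fin n)) = insert j (Finset.univ.erase j) :=
    (Finset.insert_erase (Finset.mem_univ j)).symm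
  rw [h1, Finset.powersetCard_succ_insert hj, Finset.sum_union, Finset.sum_image]
  · have hz : ∑ s ∈ Finset.powersetCard (i+1) (Finset.univ.erase j),
        (if j ∈ s then ∏ b ∈ s.erase j, lam b else 0) = 0 := by
      refine Finset.sum_eq_zero fun s hs => ?_
      have hjs : j ∉ s := fun hh => hj ((Finset.mem_powersetCard.mp hs).1 hh)
      rw [if_neg hjs]
    rw [hz, zero_add, Qh, Es]
    rw [Finset.sum_congr rfl fun t ht => ?_]
    · ring
    · have hjt : j ∉ t := fun hh => hj ((Finset.mem_powersetCard.mp ht).1 hh)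
      rw [if_pos (Finset.mem_insert_self _ _), Finset.erase_insert hjt]
  · intro x hx y hy hxy
    have hjx : j ∉ x := fun hh => hj ((Finset.mem_powersetCard.mp hx).1 hh)
    have hjy : j ∉ y := fun hh => hj ((Finset.mem_powersetCard.mp hy).1 hh)
    have := congrArg (Finset.erase · j) hxy
    simpa [Finset.erase_insert hjx, Finset.erase_insert hjy] using this
  · rw [Finset.disjoint_left]
    intro t ht ht'
    have hjt : j ∉ t := fun hh => hj ((Finset.mem_powersetCard.mp ht).1 hh)
    obtain ⟨u, hu, rfl⟩ := Finset.mem_image.mp ht'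
    exact hjt (Finset.mem_insert_self _ _)

lemma prod_sub (lam : Fin n → ℝ) (T : Finset (Fin n)) (x : ℝ) :
    ∏ s ∈ T, (x - lam s) =
      ∑ i ∈ Finset.range (T.card + 1),
        (-1:ℝ)^i * (∑ s ∈ Finset.powersetCard i T, ∏ a ∈ s, lam a) * x ^ (T.card - i) := by
  have h := Multiset.prod_X_add_C_eq_sum_esymm (T.val.map (fun a => -lam a))
  have h2 := congrArg (Polynomial.eval x) h
  rw [Multiset.map_map] at h2
  simp only [Function.comp] at h2
  have hL : Polynomial.eval x
      (Multiset.prod (T.val.map fun a => Polynomial.X + Polynomial.C (-lam a)))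
      = ∏ s ∈ T, (x - lam s) := by
    rw [Polynomial.eval_multiset_prod, Multiset.map_map, Finset.prod_eq_multiset_prod]
    congr 1
    refine Multiset.map_congr rfl fun a _ => ?_
    simp [sub_eq_add_neg]
  rw [hL] at h2
  rw [h2]
  simp only [Polynomial.eval_finset_sum, Polynomial.eval_mul, Polynomial.eval_C,
    Polynomial.eval_pow, Polynomial.eval_X, Multiset.card_map]
  refine Finset.sum_congr rfl fun i hi => ?_
  rw [Finset.esymm_map_val (fun a => -lam a) T i]
  congr 1
  rw [Finset.mul_sum]
  refine Finset.sum_congr rfl fun t ht => ?_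
  have hc : t.card = i := (Finset.mem_powersetCard.mp ht).2
  rw [← hc]
  rw [Finset.prod_congr rfl fun a _ => (neg_eq_neg_one_mul (lam a)),
    Finset.prod_mul_distrib, Finset.prod_const]

/-- `U_{ij} = q_i(λ̂_j)` (0-based rows: row `i` corresponds to 1-based index `i+1`). -/
def Umat (lam : Fin n → ℝ) : Matrix (Fin n) (Fin n) ℝ := Matrix.of fun i j => Qh lam (i : ℕ) j

/-- Stäckel-type matrix `S_{ij} = λ_j^{n-1-i}` (0-based rows). -/
def Smat (lam : Fin n → ℝ) : Matrix (Fin n) (Fin n) ℝ :=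
  Matrix.of fun i j => lam j ^ (n - 1 - (i : ℕ))

lemma Jmat_eq (lam : Fin n → ℝ) : Jmat n lam = -Umat lam := by
  ext i j
  simp [Jmat, Umat, vieteD_succ]

lemma Delta_ne (lam : Fin n → ℝ) (hinj : Function.Injective lam) (r : Fin n) :
    Delta lam r ≠ 0 := by
  rw [Delta]
  refine Finset.prod_ne_zero_iff.mpr fun s hs => ?_
  have : s ≠ r := Finset.ne_of_mem_erase hs
  exact sub_ne_zero.mpr fun hh => this (hinj hh.symm)

lemma SU (lam : Fin n → ℝ) :
    (Smat lam)ᵀ * Umat lam = Matrix.diagonal (Delta lam) := by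
  ext j r
  rw [Matrix.mul_apply]
  have hpos : 0 < n := j.pos
  have hcard : (Finset.univ.erase r).card = n - 1 := by
    rw [Finset.card_erase_of_mem (Finset.mem_univ r), Finset.card_univ, Fintype.card_fin]
  have hps := prod_sub lam (Finset.univ.erase r) (lam j)
  rw [hcard] at hps
  have hrange : n - 1 + 1 = n := by omega
  rw [hrange] at hps
  have hsum : ∑ i : Fin n, (Smat lam)ᵀ j i * Umat lam i r
      = ∏ s ∈ Finset.univ.erase r, (lam j - lam s) := by
    rw [hps, ← Fin.sum_univ_eq_sum_range
      (fun i => (-1:ℝ)^i * (∑ s ∈ Finset.powersetCard i (Finset.univ.erase r), ∏ a ∈ s, lam a)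
        * lam j ^ (n - 1 - i))]
    refine Finset.sum_congr rfl fun i _ => ?_
    simp only [Smat, Umat, Matrix.transpose_apply, Matrix.of_apply, Qh, Es]
    ring
  rw [hsum]
  by_cases hjr : j = r
  · subst hjr
    rw [Matrix.diagonal_apply_eq, Delta]
  · rw [Matrix.diagonal_apply_ne _ hjr]
    refine Finset.prod_eq_zero (Finset.mem_erase.mpr ⟨hjr, Finset.mem_univ j⟩) ?_
    ring

/-- `K = diag(Δ⁻¹) Sᵀ`, a two-sided inverse of `U`. -/
def Kmat (lam : Fin n → ℝ) : Matrix (Fin n) (Fin n) ℝ :=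
  Matrix.diagonal (fun j => (Delta lam j)⁻¹) * (Smat lam)ᵀ

lemma KU (lam : Fin n → ℝ) (hinj : Function.Injective lam) :
    Kmat lam * Umat lam = 1 := by
  rw [Kmat, Matrix.mul_assoc, SU, Matrix.diagonal_mul_diagonal]
  rw [show (fun j => (Delta lam j)⁻¹ * Delta lam j) = fun _ => (1:ℝ) from
    funext fun j => inv_mul_cancel₀ (Delta_ne lam hinj j)]
  exact Matrix.diagonal_one

lemma UK (lam : Fin n → ℝ) (hinj : Function.Injective lam) :
    Umat lam * Kmat lam = 1 := mul_eq_one_comm.mp (KU lam hinj)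

lemma base_sum (lam : Fin n → ℝ) (hinj : Function.Injective lam)
    (r : ℕ) (h1 : 1 ≤ r) (h2 : r ≤ n) :
    ∑ j, Qh lam (r-1) j / Delta lam j = if r = n then 1 else 0 := by
  have hpos : 0 < n := by omega
  have h := congrFun (congrFun (UK lam hinj) ⟨r-1, by omega⟩) ⟨n-1, by omega⟩
  rw [Matrix.mul_apply] at h
  have hone : (1 : Matrix (Fin n) (Fin n) ℝ) ⟨r-1, by omega⟩ ⟨n-1, by omega⟩
      = if r = n then 1 else 0 := by
    rw [Matrix.one_apply]
    congr 1
    simp only [Fin.mk.injEq, eq_iff_iff]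
    omega
  rw [hone] at h
  rw [← h]
  refine Finset.sum_congr rfl fun j _ => ?_
  simp only [Umat, Kmat, Matrix.of_apply, Matrix.diagonal_mul, Matrix.transpose_apply, Smat]
  rw [show n - 1 - ((⟨n-1, by omega⟩ : Fin n) : ℕ) = 0 by simp, pow_zero, mul_one,
    div_eq_mul_inv]

lemma Wpos (lam : Fin n → ℝ) (h0 : ∀ j, lam j ≠ 0) (hinj : Function.Injective lam) :
    ∀ (k r : ℕ), 1 ≤ r → r ≤ n →
      Vpos n (fun a => viete a lam) k r
        = ∑ j, Qh lam (r-1) j * lam j ^ ((k : ℕ) : ℤ) / Delta lam j := by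
  intro k
  induction k with
  | zero =>
    intro r h1 h2
    simp only [Vpos, Nat.cast_zero, zpow_zero, mul_one]
    exact (base_sum lam hinj r h1 h2).symm
  | succ k ih =>
    intro r h1 h2
    have hr : r - 1 + 1 = r := by omega
    have hmain : ∀ j, Qh lam (r-1) j * lam j ^ ((k+1 : ℕ) : ℤ) / Delta lam j
        = Qh lam r j * lam j ^ ((k : ℕ) : ℤ) / Delta lam j
          - viete r lam * (Qh lam 0 j * lam j ^ ((k : ℕ) : ℤ) / Delta lam j) := by
      intro j
      have hk := key lam (r-1) j
      rw [hr] at hk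
      have hz : lam j ^ ((k+1 : ℕ) : ℤ) = lam j ^ ((k : ℕ) : ℤ) * lam j := by
        push_cast
        rw [zpow_add_one₀ (h0 j)]
      rw [hz, Qh_zero, one_mul, mul_div_assoc' (viete r lam), ← sub_div]
      congr 1
      linear_combination lam j ^ ((k : ℕ) : ℤ) * hk
    rw [Finset.sum_congr rfl fun j _ => hmain j, Finset.sum_sub_distrib, ← Finset.mul_sum]
    show Vpos n (fun a => viete a lam) (k+1) r = _
    simp only [Vpos]
    congr 1
    · by_cases hrn : r = n
      · subst hrn
        rw [if_pos rfl]
        symm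
        refine Finset.sum_eq_zero fun j _ => ?_
        rw [Qh_n]
        simp
      · rw [if_neg hrn, ih (r+1) (by omega) (by omega)]
        simp only [Nat.add_sub_cancel]
    · rw [ih 1 le_rfl (by omega)]

lemma viete_n_ne (lam : Fin n → ℝ) (hpos : 0 < n) (h0 : ∀ j, lam j ≠ 0) :
    viete n lam ≠ 0 := by
  have hps : Finset.powersetCard n (Finset.univ : Finset (Fin n)) = {Finset.univ} := by
    have hc := Finset.powersetCard_self (Finset.univ : Finset (Fin n))
    simpa using hc
  rw [viete, hps, Finset.sum_singleton]
  exact mul_ne_zero (pow_ne_zero _ (by norm_num))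
    (Finset.prod_ne_zero_iff.mpr fun a _ => h0 a)

lemma key_n (lam : Fin n → ℝ) (hpos : 0 < n) (j : Fin n) :
    lam j * Qh lam (n-1) j = -viete n lam := by
  have hk := key lam (n-1) j
  rw [show n - 1 + 1 = n by omega] at hk
  rw [hk, Qh_n, zero_sub]

lemma Wneg (lam : Fin n → ℝ) (h0 : ∀ j, lam j ≠ 0) (hinj : Function.Injective lam) :
    ∀ (k r : ℕ), 1 ≤ r → r ≤ n →
      Vneg n (fun a => viete a lam) k r
        = ∑ j, Qh lam (r-1) j * lam j ^ (-((k : ℕ) : ℤ)) / Delta lam j := by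
  intro k
  induction k with
  | zero =>
    intro r h1 h2
    simp only [Vneg, Nat.cast_zero, neg_zero, zpow_zero, mul_one]
    exact (base_sum lam hinj r h1 h2).symm
  | succ k ih =>
    intro r h1 h2
    have hpos : 0 < n := by omega
    have hvn := viete_n_ne lam hpos h0
    have hmain : ∀ j, Qh lam (r-1) j * lam j ^ (-((k+1 : ℕ) : ℤ)) / Delta lam j
        = (if r = 1 then 0 else Qh lam (r-1-1) j * lam j ^ (-((k : ℕ) : ℤ)) / Delta lam j)
          - (if r = 1 then 1 else viete (r-1) lam) / viete n lam
            * (Qh lam (n-1) j * lam j ^ (-((k : ℕ) : ℤ)) / Delta lam j) := by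
      intro j
      have hd := Delta_ne lam hinj j
      have hl := h0 j
      have hkn := key_n lam hpos j
      have hzz : lam j ^ (-((k+1 : ℕ) : ℤ)) = lam j ^ (-((k : ℕ) : ℤ)) / lam j := by
        rw [eq_div_iff hl, ← zpow_add_one₀ hl]
        norm_num
      set a := lam j ^ (-((k : ℕ) : ℤ)) with ha
      rw [hzz]
      by_cases hr1 : r = 1
      · subst hr1
        simp only [if_pos rfl, if_true, Nat.sub_self, Qh_zero]
        have hQn : Qh lam (n-1) j = -viete n lam / lam j := by
          rw [eq_div_iff hl]; linear_combination hkn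
        rw [hQn]
        field_simp
        ring
      · have hr2 : 2 ≤ r := by omega
        have hk2 := key lam (r-1-1) j
        rw [show r - 1 - 1 + 1 = r - 1 by omega] at hk2
        simp only [if_neg hr1]
        have hQn : Qh lam (n-1) j = -viete n lam / lam j := by
          rw [eq_div_iff hl]; linear_combination hkn
        have hQr2 : Qh lam (r-1-1) j = (Qh lam (r-1) j - viete (r-1) lam) / lam j := by
          rw [eq_div_iff hl]; linear_combination hk2
        rw [hQn, hQr2]
        field_simp
        ring
    rw [Finset.sum_congr rfl fun j _ => hmain j]
    show Vneg n (fun a => viete a lam) (k+1) r = _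
    simp only [Vneg]
    rw [Finset.sum_sub_distrib]
    congr 1
    · by_cases hr1 : r = 1
      · simp [hr1]
      · rw [if_neg hr1, ih (r-1) (by omega) (by omega)]
        simp only [if_neg hr1]
    · rw [← Finset.mul_sum, ih n (by omega) le_rfl]

lemma benenti_formula (lam : Fin n → ℝ) (h0 : ∀ j, lam j ≠ 0)
    (hinj : Function.Injective lam) (k : ℤ) (r : ℕ) (h1 : 1 ≤ r) (h2 : r ≤ n) :
    benenti n (fun a => viete a lam) k r
      = ∑ j, Qh lam (r-1) j * lam j ^ k / Delta lam j := by
  rw [benenti]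
  by_cases hk : 0 ≤ k
  · rw [if_pos hk, Wpos lam h0 hinj k.toNat r h1 h2,
      show ((k.toNat : ℕ) : ℤ) = k from Int.toNat_of_nonneg hk]
  · rw [if_neg hk, Wneg lam h0 hinj (-k).toNat r h1 h2,
      show -(((-k).toNat : ℕ) : ℤ) = k from by omega]

lemma gmat_eq (lam : Fin n → ℝ) (h0 : ∀ j, lam j ≠ 0)
    (hinj : Function.Injective lam) (m : ℤ) :
    gmat n m lam
      = Smat lam * Matrix.diagonal (fun j => lam j ^ (-m) / Delta lam j) * (Smat lam)ᵀ := by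
  ext i k
  have hi := i.isLt
  have hk := k.isLt
  have hL : gmat n m lam i k
      = ∑ j, Qh lam 0 j * lam j ^ (2 * (n : ℤ) - m - (((i : ℕ) : ℤ) + 1) - (((k : ℕ) : ℤ) + 1))
          / Delta lam j := by
    rw [gmat, Matrix.of_apply]
    exact benenti_formula lam h0 hinj _ 1 le_rfl (by omega)
  rw [hL, Matrix.mul_apply]
  refine Finset.sum_congr rfl fun j _ => ?_
  rw [Matrix.mul_diagonal]
  simp only [Smat, Matrix.of_apply, Matrix.transpose_apply, Qh_zero, one_mul]
  rw [← zpow_natCast (lam j) (n - 1 - (i:ℕ)), ← zpow_natCast (lam j) (n - 1 - (k:ℕ)),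
    show ((n - 1 - (i:ℕ) : ℕ) : ℤ) = (n:ℤ) - 1 - (i:ℕ) from by omega,
    show ((n - 1 - (k:ℕ) : ℕ) : ℤ) = (n:ℤ) - 1 - (k:ℕ) from by omega]
  rw [show lam j ^ ((n:ℤ) - 1 - (i:ℕ)) * (lam j ^ (-m) / Delta lam j) * lam j ^ ((n:ℤ) - 1 - (k:ℕ))
      = lam j ^ ((n:ℤ) - 1 - (i:ℕ)) * lam j ^ (-m) * lam j ^ ((n:ℤ) - 1 - (k:ℕ)) / Delta lam j
    from by ring]
  rw [← zpow_add₀ (h0 j), ← zpow_add₀ (h0 j)]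
  congr 2
  omega

end CovProof

theorem covariant_metric_in_viete_coordinates (n : ℕ) (hn : 1 ≤ n) (m : ℤ)
    (lam : Fin n → ℝ) (hinj : Function.Injective lam) (h0 : ∀ j, lam j ≠ 0) :
    Jmat n lam * Gmat n m lam * (Jmat n lam).transpose * gmat n m lam = 1 ∧
    gmat n m lam * (Jmat n lam * Gmat n m lam * (Jmat n lam).transpose) = 1 := by
  have hU : Jmat n lam = -(CovProof.Umat lam) := CovProof.Jmat_eq lam
  set U := CovProof.Umat lam with hUdef
  set S := CovProof.Smat lam with hSdef
  set D' : Matrix (Fin n) (Fin n) ℝ :=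
    Matrix.diagonal (fun j => lam j ^ (-m) / Delta lam j) with hD'
  have hg : gmat n m lam = S * D' * S.transpose := CovProof.gmat_eq lam h0 hinj m
  have hUtS : U.transpose * S = Matrix.diagonal (Delta lam) := by
    have h2 := congrArg Matrix.transpose (CovProof.SU lam)
    rwa [Matrix.transpose_mul, Matrix.transpose_transpose, Matrix.diagonal_transpose] at h2
  have hδ : Gmat n m lam * Matrix.diagonal (Delta lam) * D'
      = Matrix.diagonal fun j => (Delta lam j)⁻¹ := by
    rw [Gmat, hD', Matrix.diagonal_mul_diagonal, Matrix.diagonal_mul_diagonal]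
    refine congrArg Matrix.diagonal (funext fun j => ?_)
    have h1 := h0 j
    have h2 := CovProof.Delta_ne lam hinj j
    have h3 : lam j ^ m ≠ 0 := zpow_ne_zero m h1
    rw [zpow_neg]
    field_simp
  have main : Jmat n lam * Gmat n m lam * (Jmat n lam).transpose * gmat n m lam = 1 := by
    rw [hU, hg, Matrix.transpose_neg,
      show (-U) * Gmat n m lam * (-(U.transpose)) = U * Gmat n m lam * U.transpose from by
        rw [Matrix.neg_mul, neg_mul_neg]]
    rw [Matrix.mul_assoc S D' S.transpose, ← Matrix.mul_assoc (U * Gmat n m lam * U.transpose) S (D' * S.transpose)]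
    rw [Matrix.mul_assoc (U * Gmat n m lam) U.transpose S, hUtS]
    rw [← Matrix.mul_assoc (U * Gmat n m lam * Matrix.diagonal (Delta lam)) D' S.transpose]
    rw [Matrix.mul_assoc U (Gmat n m lam) (Matrix.diagonal (Delta lam)),
      Matrix.mul_assoc U (Gmat n m lam * Matrix.diagonal (Delta lam)) D']
    rw [hδ, Matrix.mul_assoc U _ S.transpose]
    exact CovProof.UK lam hinj
  exact ⟨main, mul_eq_one_comm.mp main⟩
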